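/- arXiv:1810.08435 — 3 statements merged into one kernel-verified Lean document; each statement's English description precedes it below -/
import Mathlib

section
/- One-dimensional fractional identity: for σ = 1/2 and x ∈ (-1,1), the function u(x) = (1-x²)^{1/2} (extended by 0 outside (-1,1)) satisfies the half-Laplacian equation (-Δ)^{1/2} u(x) = 1 for all x ∈ (-1,1), where (-Δ)^{1/2} u(x) = (1/π) P.V. ∫_ℝ (u(x)-u(y))/(x-y)² dy, equivalently (1/π)∫_ℝ (2u(x)-u(x+y)-u(x-y))/(2y²) dy. -/
open Real MeasureTheory Set Filter Topology

noncomputable def vv (t : ℝ) : ℝ := Real.sqrt (max (1 - t^2) 0)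

lemma vv_nonneg (t : ℝ) : 0 ≤ vv t := Real.sqrt_nonneg _

lemma vv_eq_sqrt {t : ℝ} (h : 0 ≤ 1 - t^2) : vv t = Real.sqrt (1 - t^2) := by
  rw [vv, max_eq_left h]

lemma vv_eq_zero {t : ℝ} (h : 1 - t^2 ≤ 0) : vv t = 0 := by
  rw [vv, max_eq_right h, Real.sqrt_zero]

lemma vv_cont : Continuous vv := by
  unfold vv; fun_prop

lemma vv_neg (t : ℝ) : vv (-t) = vv t := by
  simp [vv, neg_pow]

lemma vv_hasDerivAt {t : ℝ} (h : t^2 < 1) :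
    HasDerivAt vv (-t / Real.sqrt (1 - t^2)) t := by
  have hpos : 0 < 1 - t^2 := by linarith
  have h1 : HasDerivAt (fun s : ℝ => 1 - s^2) (-(2*t)) t := by
    simpa using ((hasDerivAt_pow 2 t).const_sub 1)
  have h2 : HasDerivAt (fun s : ℝ => Real.sqrt (1 - s^2))
      (1 / (2 * Real.sqrt (1 - t^2)) * (-(2*t))) t :=
    (Real.hasDerivAt_sqrt hpos.ne').comp t h1
  have hev : (fun s : ℝ => Real.sqrt (1 - s^2)) =ᶠ[𝓝 t] vv := by
    have : ∀ᶠ s in 𝓝 t, (0:ℝ) < 1 - s^2 :=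
      ContinuousAt.eventually_lt (continuousAt_const) (by fun_prop) hpos
    filter_upwards [this] with s hs
    rw [vv_eq_sqrt hs.le]
  have := h2.congr_of_eventuallyEq hev.symm
  apply this.congr_deriv
  symm
  have hs : Real.sqrt (1 - t^2) ≠ 0 := (Real.sqrt_pos.2 hpos).ne'
  field_simp

lemma vv_hasDerivAt_zero {t : ℝ} (h : 1 < t^2) : HasDerivAt vv 0 t := by
  have hev : (fun _ : ℝ => (0:ℝ)) =ᶠ[𝓝 t] vv := by
    have : ∀ᶠ s in 𝓝 t, (1:ℝ) < s^2 :=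
      ContinuousAt.eventually_lt (continuousAt_const) (by fun_prop) h
    filter_upwards [this] with s hs
    rw [vv_eq_zero (by linarith)]
  exact (hasDerivAt_const t 0).congr_of_eventuallyEq hev.symm

lemma log_N_hasDerivAt {x c t : ℝ} (hx0 : 0 ≤ x) (hx1 : x < 1)
    (hc : c = Real.sqrt (1 - x^2)) (ht : t^2 < 1) (htx : t ≠ x) :
    HasDerivAt (fun s => Real.log (1 - x*s + c * vv s))
      (1/(t-x) - c/((t-x) * Real.sqrt (1-t^2))) t := by
  have ht1 : 0 < 1 - t^2 := by linarith
  set w := Real.sqrt (1 - t^2) with hw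
  have hwpos : 0 < w := Real.sqrt_pos.2 ht1
  have hw2 : w^2 = 1 - t^2 := Real.sq_sqrt ht1.le
  have hcpos : 0 < c := by rw [hc]; exact Real.sqrt_pos.2 (by nlinarith)
  have hc2 : c^2 = 1 - x^2 := by rw [hc]; exact Real.sq_sqrt (by nlinarith)
  have habs : |t| < 1 := by rw [abs_lt]; constructor <;> nlinarith
  have hxt : x * t < 1 := by
    calc x * t ≤ |x * t| := le_abs_self _
    _ = |x| * |t| := abs_mul x t
    _ < 1 := by rw [abs_of_nonneg hx0]; nlinarith [abs_nonneg t]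
  have hN : 0 < 1 - x*t + c * vv t := by
    have : 0 ≤ c * vv t := by
      rw [vv_eq_sqrt ht1.le]; positivity
    linarith
  have hNd : HasDerivAt (fun s => 1 - x*s + c * vv s) (-x + c * (-t/w)) t := by
    have h1 : HasDerivAt (fun s : ℝ => 1 - x*s) (-x) t := by
      simpa using ((hasDerivAt_id t).const_mul x).const_sub 1
    exact h1.add ((vv_hasDerivAt ht).const_mul c)
  have := hNd.log hN.ne'
  convert this using 1
  rw [vv_eq_sqrt ht1.le, ← hw]
  have htx' : t - x ≠ 0 := sub_ne_zero.2 htx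
  have hvt : vv t = w := by rw [vv_eq_sqrt ht1.le, hw]
  rw [hvt] at hN
  rw [div_sub_div _ _ htx' (by positivity), div_eq_div_iff (by positivity) hN.ne']
  field_simp
  linear_combination (c + c^2*t - c^2*x - t + t*x^2 + x - x^3) * hw2 + ((1-t^2)*(t-x) - w - w^2*(t-x)) * hc2

noncomputable def FF (x c y : ℝ) : ℝ := (2*c - vv (x+y) - vv (x-y))/(2*y^2)

noncomputable def HH1 (x c y : ℝ) : ℝ :=
  -(2*c - vv (x+y) - vv (x-y))/(2*y)
    + (Real.arcsin (x+y) - Real.arcsin (x-y))/2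
    - x/(2*c) * (Real.log (1 - x*(x+y) + c * vv (x+y)) - Real.log (1 - x*(x-y) + c * vv (x-y)))

noncomputable def HH2 (x c y : ℝ) : ℝ :=
  -(2*c - vv (x-y))/(2*y) - Real.arcsin (x-y)/2
    + x/(2*c) * (Real.log (1 - x*(x-y) + c * vv (x-y)) - Real.log y)

noncomputable def HH3 (c y : ℝ) : ℝ := -c/y

lemma H1_hasDerivAt {x c y : ℝ} (hx0 : 0 ≤ x) (hx1 : x < 1)
    (hc : c = Real.sqrt (1 - x^2)) (hy : y ∈ Set.Ioo 0 (1-x)) :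
    HasDerivAt (HH1 x c) (FF x c y) y := by
  unfold HH1 FF
  obtain ⟨hy0, hym⟩ := hy
  have hA1 : (x+y)^2 < 1 := by nlinarith
  have hB1 : (x-y)^2 < 1 := by nlinarith
  set A := Real.sqrt (1 - (x+y)^2) with hA
  set B := Real.sqrt (1 - (x-y)^2) with hB
  have hApos : 0 < A := Real.sqrt_pos.2 (by linarith)
  have hBpos : 0 < B := Real.sqrt_pos.2 (by linarith)
  have hcpos : 0 < c := by rw [hc]; exact Real.sqrt_pos.2 (by nlinarith)
  have hvA : vv (x+y) = A := vv_eq_sqrt (by linarith)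
  have hvB : vv (x-y) = B := vv_eq_sqrt (by linarith)
  have hiA : HasDerivAt (fun y : ℝ => x + y) 1 y := (hasDerivAt_id y).const_add x
  have hiB : HasDerivAt (fun y : ℝ => x - y) (-1) y := by
    exact (hasDerivAt_id' y).const_sub x
  have hfA : HasDerivAt (fun y : ℝ => vv (x+y)) (-(x+y)/A * 1) y :=
    (vv_hasDerivAt hA1).comp y hiA
  have hfB : HasDerivAt (fun y : ℝ => vv (x-y)) (-(x-y)/B * (-1)) y :=
    (vv_hasDerivAt hB1).comp y hiB
  have hnum : HasDerivAt (fun y : ℝ => -(2*c - vv (x+y) - vv (x-y)))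
      (-(0 - (-(x+y)/A * 1) - (-(x-y)/B * (-1)))) y := by
    exact (((hasDerivAt_const y (2*c)).sub hfA).sub hfB).neg
  have hden : HasDerivAt (fun y : ℝ => 2*y) 2 y := by
    simpa using (hasDerivAt_id y).const_mul 2
  have hT1 : HasDerivAt (fun y : ℝ => -(2*c - vv (x+y) - vv (x-y))/(2*y))
      (((-(0 - (-(x+y)/A * 1) - (-(x-y)/B * (-1)))) * (2*y)
        - (-(2*c - vv (x+y) - vv (x-y))) * 2) / (2*y)^2) y :=
    hnum.div hden (by positivity)
  have haA : HasDerivAt (fun y : ℝ => Real.arcsin (x+y)) (1 / A * 1) y :=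
    (Real.hasDerivAt_arcsin (by nlinarith) (by nlinarith)).comp y hiA
  have haB : HasDerivAt (fun y : ℝ => Real.arcsin (x-y)) (1 / B * (-1)) y :=
    (Real.hasDerivAt_arcsin (by nlinarith) (by nlinarith)).comp y hiB
  have hT2 : HasDerivAt (fun y : ℝ => (Real.arcsin (x+y) - Real.arcsin (x-y))/2)
      ((1 / A * 1 - 1 / B * (-1))/2) y := (haA.sub haB).div_const 2
  have hlA : HasDerivAt (fun y : ℝ => Real.log (1 - x*(x+y) + c * vv (x+y)))
      ((1/((x+y)-x) - c/(((x+y)-x) * A)) * 1) y :=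
    (log_N_hasDerivAt hx0 hx1 hc hA1 (by linarith)).comp y hiA
  have hlB : HasDerivAt (fun y : ℝ => Real.log (1 - x*(x-y) + c * vv (x-y)))
      ((1/((x-y)-x) - c/(((x-y)-x) * B)) * (-1)) y :=
    (log_N_hasDerivAt hx0 hx1 hc hB1 (by linarith)).comp y hiB
  have hT3 : HasDerivAt (fun y : ℝ => x/(2*c) * (Real.log (1 - x*(x+y) + c * vv (x+y))
        - Real.log (1 - x*(x-y) + c * vv (x-y))))
      (x/(2*c) * ((1/((x+y)-x) - c/(((x+y)-x) * A)) * 1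
        - (1/((x-y)-x) - c/(((x-y)-x) * B)) * (-1))) y := (hlA.sub hlB).const_mul _
  have := (hT1.add hT2).sub hT3
  apply this.congr_deriv
  symm
  rw [hvA, hvB]
  have h1 : (x+y) - x = y := by ring
  have h2 : (x-y) - x = -y := by ring
  rw [h1, h2]
  field_simp
  ring

lemma H2_hasDerivAt {x c y : ℝ} (hx0 : 0 ≤ x) (hx1 : x < 1)
    (hc : c = Real.sqrt (1 - x^2)) (hy : y ∈ Set.Ioo (1-x) (1+x)) :
    HasDerivAt (HH2 x c) (FF x c y) y := by
  unfold HH2 FF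
  obtain ⟨hym, hyM⟩ := hy
  have hy0 : 0 < y := by linarith
  have hA0 : vv (x+y) = 0 := vv_eq_zero (by nlinarith)
  have hB1 : (x-y)^2 < 1 := by nlinarith
  set B := Real.sqrt (1 - (x-y)^2) with hB
  have hBpos : 0 < B := Real.sqrt_pos.2 (by linarith)
  have hcpos : 0 < c := by rw [hc]; exact Real.sqrt_pos.2 (by nlinarith)
  have hvB : vv (x-y) = B := vv_eq_sqrt (by linarith)
  have hiB : HasDerivAt (fun y : ℝ => x - y) (-1) y := by
    exact (hasDerivAt_id' y).const_sub x
  have hfB : HasDerivAt (fun y : ℝ => vv (x-y)) (-(x-y)/B * (-1)) y :=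
    (vv_hasDerivAt hB1).comp y hiB
  have hnum : HasDerivAt (fun y : ℝ => -(2*c - vv (x-y))) (-(0 - (-(x-y)/B * (-1)))) y :=
    ((hasDerivAt_const y (2*c)).sub hfB).neg
  have hden : HasDerivAt (fun y : ℝ => 2*y) 2 y := by
    simpa using (hasDerivAt_id y).const_mul 2
  have hT1 : HasDerivAt (fun y : ℝ => -(2*c - vv (x-y))/(2*y))
      (((-(0 - (-(x-y)/B * (-1)))) * (2*y) - (-(2*c - vv (x-y))) * 2) / (2*y)^2) y :=
    hnum.div hden (by positivity)
  have haB : HasDerivAt (fun y : ℝ => Real.arcsin (x-y)/2) ((1 / B * (-1))/2) y :=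
    (((Real.hasDerivAt_arcsin (by nlinarith) (by nlinarith)).comp y hiB)).div_const 2
  have hlB : HasDerivAt (fun y : ℝ => Real.log (1 - x*(x-y) + c * vv (x-y)))
      ((1/((x-y)-x) - c/(((x-y)-x) * B)) * (-1)) y :=
    (log_N_hasDerivAt hx0 hx1 hc hB1 (by linarith)).comp y hiB
  have hly : HasDerivAt (fun y : ℝ => Real.log y) (1/y) y := by
    simpa using Real.hasDerivAt_log hy0.ne'
  have hT3 : HasDerivAt (fun y : ℝ => x/(2*c) * (Real.log (1 - x*(x-y) + c * vv (x-y))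
        - Real.log y))
      (x/(2*c) * ((1/((x-y)-x) - c/(((x-y)-x) * B)) * (-1) - 1/y)) y :=
    (hlB.sub hly).const_mul _
  have := (hT1.sub haB).add hT3
  apply this.congr_deriv
  symm
  rw [hA0, hvB]
  have h2 : (x-y) - x = -y := by ring
  rw [h2]
  field_simp
  ring

lemma H3_hasDerivAt {x c y : ℝ} (hx0 : 0 ≤ x) (hy : y ∈ Set.Ici (1+x)) :
    HasDerivAt (HH3 c) (FF x c y) y := by
  unfold HH3 FF
  have hy0 : 0 < y := by have := hy.out; linarith
  have hA0 : vv (x+y) = 0 := vv_eq_zero (by nlinarith [hy.out])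
  have hB0 : vv (x-y) = 0 := vv_eq_zero (by nlinarith [hy.out])
  have : HasDerivAt (fun y : ℝ => -c/y) ((0 * y - (-c) * 1)/y^2) y :=
    (hasDerivAt_const y (-c)).div (hasDerivAt_id y) hy0.ne'
  convert this using 1
  rw [hA0, hB0]
  field_simp
  ring
-- appended piece: continuity lemmas
lemma NA_pos {x c t : ℝ} (hx0 : 0 ≤ x) (hx1 : x < 1) (hc : c = Real.sqrt (1 - x^2))
    (ht : |t| ≤ 1) : 0 < 1 - x*t + c * vv t := by
  have hcnn : 0 ≤ c := by rw [hc]; exact Real.sqrt_nonneg _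
  have h1 : x * t ≤ x := by
    calc x * t ≤ x * |t| := by
          rcases le_or_gt 0 t with h | h
          · rw [abs_of_nonneg h]
          · nlinarith [abs_nonneg t]
    _ ≤ x * 1 := by nlinarith
    _ = x := mul_one x
  nlinarith [mul_nonneg hcnn (vv_nonneg t)]

lemma contNA {x c : ℝ} : Continuous (fun y : ℝ => 1 - x*(x+y) + c * vv (x+y)) :=
  ((continuous_const.sub (continuous_const.mul (continuous_const.add continuous_id))).add
    (continuous_const.mul (vv_cont.comp (continuous_const.add continuous_id))))

lemma contNB {x c : ℝ} : Continuous (fun y : ℝ => 1 - x*(x-y) + c * vv (x-y)) :=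
  ((continuous_const.sub (continuous_const.mul (continuous_const.sub continuous_id))).add
    (continuous_const.mul (vv_cont.comp (continuous_const.sub continuous_id))))

lemma H1_contOn {x c : ℝ} (hx0 : 0 ≤ x) (hx1 : x < 1)
    (hc : c = Real.sqrt (1 - x^2)) :
    ContinuousOn (HH1 x c) (Icc 0 (1-x)) := by
  have hcpos : 0 < c := by rw [hc]; exact Real.sqrt_pos.2 (by nlinarith)
  have habsA : ∀ y ∈ Icc (0:ℝ) (1-x), |x + y| ≤ 1 := by
    intro y hy; rw [abs_le]; constructor <;> [linarith [hy.1]; linarith [hy.2]]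
  have habsB : ∀ y ∈ Icc (0:ℝ) (1-x), |x - y| ≤ 1 := by
    intro y hy; rw [abs_le]; constructor <;> [linarith [hy.2]; linarith [hy.1]]
  have hrest : ∀ y₀ ∈ Icc (0:ℝ) (1-x), ContinuousAt (fun y =>
      (Real.arcsin (x+y) - Real.arcsin (x-y))/2
      - x/(2*c) * (Real.log (1 - x*(x+y) + c * vv (x+y))
          - Real.log (1 - x*(x-y) + c * vv (x-y)))) y₀ := by
    intro y₀ hy₀
    have hNA : (0:ℝ) < 1 - x*(x+y₀) + c * vv (x+y₀) := NA_pos hx0 hx1 hc (habsA y₀ hy₀)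
    have hNB : (0:ℝ) < 1 - x*(x-y₀) + c * vv (x-y₀) := NA_pos hx0 hx1 hc (habsB y₀ hy₀)
    apply ContinuousAt.sub
    · exact ((Real.continuous_arcsin.continuousAt.comp (by fun_prop)).sub
        (Real.continuous_arcsin.continuousAt.comp (by fun_prop))).div_const 2
    · exact ((contNA.continuousAt.log hNA.ne').sub
        (contNB.continuousAt.log hNB.ne')).const_mul _
  have main : ContinuousOn (fun y : ℝ => -(2*c - vv (x+y) - vv (x-y))/(2*y)
      + ((Real.arcsin (x+y) - Real.arcsin (x-y))/2
      - x/(2*c) * (Real.log (1 - x*(x+y) + c * vv (x+y))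
          - Real.log (1 - x*(x-y) + c * vv (x-y))))) (Icc 0 (1-x)) := by
    intro y hy
    rcases eq_or_lt_of_le hy.1 with h0 | h0
    · have hy0 : y = 0 := h0.symm
      subst hy0
      have hvx : vv x = c := by rw [vv_eq_sqrt (by nlinarith), hc]
      have hg : HasDerivAt (fun y : ℝ => -(2*c - vv (x+y) - vv (x-y))) 0 0 := by
        have hx2 : x^2 < 1 := by nlinarith
        have hiA : HasDerivAt (fun y : ℝ => x + y) 1 (0:ℝ) := (hasDerivAt_id 0).const_add x
        have hiB : HasDerivAt (fun y : ℝ => x - y) (-1) (0:ℝ) := by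
          exact (hasDerivAt_id' (0:ℝ)).const_sub x
        have hfA : HasDerivAt (fun y : ℝ => vv (x+y)) (-(x+0)/Real.sqrt (1-(x+0)^2) * 1) 0 :=
          (vv_hasDerivAt (by simpa using hx2)).comp 0 hiA
        have hfB : HasDerivAt (fun y : ℝ => vv (x-y)) (-(x-0)/Real.sqrt (1-(x-0)^2) * (-1)) 0 :=
          (vv_hasDerivAt (by simpa using hx2)).comp 0 hiB
        have := (((hasDerivAt_const (0:ℝ) (2*c)).sub hfA).sub hfB).neg
        apply this.congr_deriv
        symm
        simp only [add_zero, sub_zero]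
        ring
      have hslope : Tendsto (fun y : ℝ => -(2*c - vv (x+y) - vv (x-y))/(2*y)) (𝓝[≠] 0) (𝓝 0) := by
        have h1 := hasDerivAt_iff_tendsto_slope.1 hg
        have h2 : Tendsto (fun y : ℝ => slope (fun y : ℝ => -(2*c - vv (x+y) - vv (x-y))) 0 y / 2)
            (𝓝[≠] 0) (𝓝 (0/2)) := h1.div_const 2
        rw [zero_div] at h2
        apply h2.congr'
        filter_upwards [self_mem_nhdsWithin] with z hz
        have hz0 : (z:ℝ) ≠ 0 := hz
        rw [slope_def_field]
        simp only [add_zero, sub_zero, hvx]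
        field_simp
        ring
      have ht1 : ContinuousWithinAt (fun y : ℝ => -(2*c - vv (x+y) - vv (x-y))/(2*y))
          (Icc 0 (1-x)) 0 := by
        rw [← continuousWithinAt_diff_self]
        unfold ContinuousWithinAt
        beta_reduce
        rw [show -(2*c - vv (x+(0:ℝ)) - vv (x-0))/(2*(0:ℝ)) = 0 by simp]
        exact hslope.mono_left (nhdsWithin_mono 0 (fun z hz => hz.2))
      exact ht1.add ((hrest 0 ⟨le_refl 0, by linarith⟩).continuousWithinAt)
    · apply ContinuousAt.continuousWithinAt
      have hy0 : (0:ℝ) < y := h0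
      have ht1 : ContinuousAt (fun y : ℝ => -(2*c - vv (x+y) - vv (x-y))/(2*y)) y := by
        apply ContinuousAt.div
        · exact (((continuous_const.sub (vv_cont.comp (continuous_const.add continuous_id))).sub
            (vv_cont.comp (continuous_const.sub continuous_id))).neg).continuousAt
        · fun_prop
        · positivity
      exact ht1.add (hrest y hy)
  exact main.congr (fun z hz => by unfold HH1; ring)
lemma H2_contOn {x c : ℝ} (hx0 : 0 ≤ x) (hx1 : x < 1)
    (hc : c = Real.sqrt (1 - x^2)) :
    ContinuousOn (HH2 x c) (Icc (1-x) (1+x)) := by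
  have hcpos : 0 < c := by rw [hc]; exact Real.sqrt_pos.2 (by nlinarith)
  intro y hy
  have hy0 : (0:ℝ) < y := lt_of_lt_of_le (by linarith) hy.1
  have habsB : |x - y| ≤ 1 := by
    rw [abs_le]; constructor <;> [linarith [hy.2]; linarith [hy.1]]
  have hNB : (0:ℝ) < 1 - x*(x-y) + c * vv (x-y) := NA_pos hx0 hx1 hc habsB
  apply ContinuousAt.continuousWithinAt
  unfold HH2
  apply ContinuousAt.add
  · apply ContinuousAt.sub
    · apply ContinuousAt.div
      · exact ((continuous_const.sub
          (vv_cont.comp (continuous_const.sub continuous_id))).neg).continuousAt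
      · fun_prop
      · positivity
    · exact (Real.continuous_arcsin.continuousAt.comp (by fun_prop)).div_const 2
  · exact ((contNB.continuousAt.log hNB.ne').sub
      (Real.continuousAt_log hy0.ne')).const_mul _

lemma FF_nonneg_Ioo {x c : ℝ} (hx0 : 0 ≤ x) (hx1 : x < 1)
    (hc : c = Real.sqrt (1 - x^2)) :
    ∀ y ∈ Ioo (0:ℝ) (1-x), 0 ≤ FF x c y := by
  intro y hy
  obtain ⟨hy0, hym⟩ := hy
  have hA1 : (x+y)^2 < 1 := by nlinarith
  have hB1 : (x-y)^2 < 1 := by nlinarith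
  have hvA : vv (x+y) = Real.sqrt (1 - (x+y)^2) := vv_eq_sqrt (by linarith)
  have hvB : vv (x-y) = Real.sqrt (1 - (x-y)^2) := vv_eq_sqrt (by linarith)
  set A := Real.sqrt (1 - (x+y)^2) with hA
  set B := Real.sqrt (1 - (x-y)^2) with hB
  have hA2 : A^2 = 1 - (x+y)^2 := Real.sq_sqrt (by linarith)
  have hB2 : B^2 = 1 - (x-y)^2 := Real.sq_sqrt (by linarith)
  have hc2 : c^2 = 1 - x^2 := by rw [hc]; exact Real.sq_sqrt (by nlinarith)
  have hAnn : 0 ≤ A := Real.sqrt_nonneg _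
  have hBnn : 0 ≤ B := Real.sqrt_nonneg _
  have hcnn : 0 ≤ c := by rw [hc]; exact Real.sqrt_nonneg _
  have hsum : A + B ≤ 2*c := by
    have h1 : (A+B)^2 ≤ (2*c)^2 := by nlinarith [sq_nonneg (A-B)]
    calc A + B = Real.sqrt ((A+B)^2) := (Real.sqrt_sq (by linarith)).symm
    _ ≤ Real.sqrt ((2*c)^2) := Real.sqrt_le_sqrt h1
    _ = 2*c := Real.sqrt_sq (by linarith)
  unfold FF
  rw [hvA, hvB]
  apply div_nonneg (by linarith) (by positivity)

lemma FF_nonneg_Ioi {x c : ℝ} (hx0 : 0 ≤ x) (hcnn : 0 ≤ c) :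
    ∀ y ∈ Ioi (1+x), 0 ≤ FF x c y := by
  intro y hy
  have hy' : 1 + x < y := hy
  have hA0 : vv (x+y) = 0 := vv_eq_zero (by nlinarith)
  have hB0 : vv (x-y) = 0 := vv_eq_zero (by nlinarith)
  unfold FF
  rw [hA0, hB0]
  have hy0 : (0:ℝ) < y := by linarith
  apply div_nonneg (by linarith) (by positivity)
set_option maxHeartbeats 2000000 in
lemma core {x c : ℝ} (hx0 : 0 ≤ x) (hx1 : x < 1) (hc : c = Real.sqrt (1-x^2)) :
    ∫ y : ℝ, FF x c y = Real.pi := by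
  have hm : (0:ℝ) < 1 - x := by linarith
  have hM12 : (1:ℝ) - x ≤ 1 + x := by linarith
  have hM0 : (0:ℝ) < 1 + x := by linarith
  have hcpos : 0 < c := by rw [hc]; exact Real.sqrt_pos.2 (by nlinarith)
  -- piece 1
  have hd1 : ∀ y ∈ Ioo (0:ℝ) (1-x), HasDerivAt (HH1 x c) (FF x c y) y :=
    fun y hy => H1_hasDerivAt hx0 hx1 hc hy
  have int1 : IntervalIntegrable (FF x c) volume 0 (1-x) := by
    rw [intervalIntegrable_iff_integrableOn_Ioc_of_le hm.le]
    exact intervalIntegral.integrableOn_deriv_of_nonneg (H1_contOn hx0 hx1 hc) hd1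
      (FF_nonneg_Ioo hx0 hx1 hc)
  have I1 : ∫ y in (0:ℝ)..(1-x), FF x c y = HH1 x c (1-x) - HH1 x c 0 :=
    intervalIntegral.integral_eq_sub_of_hasDeriv_right_of_le hm.le (H1_contOn hx0 hx1 hc)
      (fun y hy => (hd1 y hy).hasDerivWithinAt) int1
  -- piece 2
  have contFF : ContinuousOn (FF x c) (Icc (1-x) (1+x)) := by
    intro y hy
    have hy0 : (0:ℝ) < y := lt_of_lt_of_le hm hy.1
    apply ContinuousAt.continuousWithinAt
    unfold FF
    apply ContinuousAt.div
    · exact ((continuous_const.sub (vv_cont.comp (continuous_const.add continuous_id))).sub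
        (vv_cont.comp (continuous_const.sub continuous_id))).continuousAt
    · fun_prop
    · positivity
  have int2 : IntervalIntegrable (FF x c) volume (1-x) (1+x) :=
    ContinuousOn.intervalIntegrable (by rw [uIcc_of_le hM12]; exact contFF)
  have I2 : ∫ y in (1-x)..(1+x), FF x c y = HH2 x c (1+x) - HH2 x c (1-x) :=
    intervalIntegral.integral_eq_sub_of_hasDeriv_right_of_le hM12 (H2_contOn hx0 hx1 hc)
      (fun y hy => (H2_hasDerivAt hx0 hx1 hc hy).hasDerivWithinAt) int2
  -- piece 3
  have hd3 : ∀ y ∈ Ici (1+x), HasDerivAt (HH3 c) (FF x c y) y :=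
    fun y hy => H3_hasDerivAt hx0 hy
  have htend : Tendsto (HH3 c) atTop (𝓝 0) := by
    have : Tendsto (fun y : ℝ => -c/y) atTop (𝓝 0) :=
      tendsto_const_nhds.div_atTop tendsto_id
    exact this
  have int3 : IntegrableOn (FF x c) (Ioi (1+x)) :=
    integrableOn_Ioi_deriv_of_nonneg' hd3 (FF_nonneg_Ioi hx0 hcpos.le) htend
  have I3 : ∫ y in Ioi (1+x), FF x c y = 0 - HH3 c (1+x) :=
    integral_Ioi_of_hasDerivAt_of_tendsto' hd3 int3 htend
  -- integrability on Ioi 0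
  have intIoc1 : IntegrableOn (FF x c) (Ioc 0 (1-x)) :=
    (intervalIntegrable_iff_integrableOn_Ioc_of_le hm.le).1 int1
  have intIoc2 : IntegrableOn (FF x c) (Ioc (1-x) (1+x)) :=
    (intervalIntegrable_iff_integrableOn_Ioc_of_le hM12).1 int2
  have hu1 : Ioc (0:ℝ) (1-x) ∪ Ioc (1-x) (1+x) = Ioc 0 (1+x) :=
    Ioc_union_Ioc_eq_Ioc hm.le hM12
  have hu2 : Ioc (0:ℝ) (1+x) ∪ Ioi (1+x) = Ioi 0 := Ioc_union_Ioi_eq_Ioi hM0.le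
  have intIocM : IntegrableOn (FF x c) (Ioc 0 (1+x)) := by
    rw [← hu1]; exact intIoc1.union intIoc2
  have intIoi0 : IntegrableOn (FF x c) (Ioi 0) := by
    rw [← hu2]; exact intIocM.union int3
  -- value on Ioi 0
  have e1 : ∫ y in Ioc (0:ℝ) (1+x), FF x c y
      = (∫ y in Ioc (0:ℝ) (1-x), FF x c y) + ∫ y in Ioc (1-x) (1+x), FF x c y := by
    rw [← hu1]
    exact setIntegral_union (Ioc_disjoint_Ioc_of_le le_rfl) measurableSet_Ioc intIoc1 intIoc2
  have e2 : ∫ y in Ioi (0:ℝ), FF x c y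
      = (∫ y in Ioc (0:ℝ) (1+x), FF x c y) + ∫ y in Ioi (1+x), FF x c y := by
    rw [← hu2]
    exact setIntegral_union Ioc_disjoint_Ioi_same measurableSet_Ioi intIocM int3
  have vH10 : HH1 x c 0 = 0 := by unfold HH1; simp
  have key : HH1 x c (1-x) - HH1 x c 0 + (HH2 x c (1+x) - HH2 x c (1-x))
      + (0 - HH3 c (1+x)) = π/2 := by
    rw [vH10]
    unfold HH1 HH2 HH3
    rw [show x + (1-x) = 1 by ring, show x - (1-x) = 2*x-1 by ring,
      show x - (1+x) = -1 by ring]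
    rw [show vv 1 = 0 from vv_eq_zero (by norm_num),
      show vv (-1) = 0 from vv_eq_zero (by norm_num)]
    rw [show (1:ℝ) - x*1 + c*0 = 1-x by ring, show (1:ℝ) - x*(-1) + c*0 = 1+x by ring,
      Real.arcsin_one, Real.arcsin_neg_one]
    field_simp
    ring
  have vIoi : ∫ y in Ioi (0:ℝ), FF x c y = π/2 := by
    rw [e2, e1]
    rw [← intervalIntegral.integral_of_le hm.le, ← intervalIntegral.integral_of_le hM12]
    rw [I1, I2, I3]
    linarith [key]
  -- even reflection
  have hFneg : ∀ z : ℝ, FF x c (-z) = FF x c z := by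
    intro z
    unfold FF
    rw [show x + -z = x - z by ring, show x - -z = x + z by ring]
    ring
  have hcomp : (FF x c) ∘ (Neg.neg : ℝ → ℝ) = FF x c := funext hFneg
  have intIio : IntegrableOn (FF x c) (Iio 0) := by
    have hiff := (MeasurePreserving.integrableOn_comp_preimage
      (Measure.measurePreserving_neg (volume : Measure ℝ))
      (Homeomorph.neg ℝ).measurableEmbedding (f := FF x c) (s := Ioi (0:ℝ)))
    have := hiff.2 intIoi0
    rw [hcomp] at this
    have hpre : (Neg.neg : ℝ → ℝ) ⁻¹' (Ioi (0:ℝ)) = Iio 0 := by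
      ext z; simp
    rwa [hpre] at this
  have intIic : IntegrableOn (FF x c) (Iic 0) := by
    rw [integrableOn_Iic_iff_integrableOn_Iio]
    exact intIio
  have vIic : ∫ y in Iic (0:ℝ), FF x c y = π/2 := by
    have h := integral_comp_neg_Ioi (0:ℝ) (FF x c)
    rw [neg_zero] at h
    rw [← h]
    rw [show (fun y : ℝ => FF x c (-y)) = FF x c from funext hFneg]
    exact vIoi
  rw [← intervalIntegral.integral_Iic_add_Ioi intIic intIoi0, vIic, vIoi]
  ring
lemma core' {x : ℝ} (hx0 : 0 ≤ x) (hx1 : x < 1) :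
    ∫ y : ℝ, (2 * vv x - vv (x+y) - vv (x-y)) / (2*y^2) = Real.pi := by
  have hx2 : (0:ℝ) ≤ 1 - x^2 := by nlinarith
  have heq : (fun y : ℝ => (2 * vv x - vv (x+y) - vv (x-y))/(2*y^2))
      = FF x (Real.sqrt (1-x^2)) := by
    funext y
    rw [FF, vv_eq_sqrt hx2]
  rw [heq]
  exact core hx0 hx1 rfl

/-- the function `u(x) = (1-x²)₊^{1/2}` satisfies `(-Δ)^{1/2} u = 1` on
`(-1,1)`, where the half-Laplacian is the finite-difference singular integral
`(1/π) ∫_ℝ (2u(x)-u(x+y)-u(x-y))/(2y²) dy`. -/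
theorem stmt_9 (u : ℝ → ℝ) (hu : ∀ x : ℝ, u x = Real.sqrt (max (1 - x^2) 0)) :
    ∀ x ∈ Set.Ioo (-1:ℝ) 1,
      (1/Real.pi) * ∫ y : ℝ, (2 * u x - u (x+y) - u (x-y)) / (2 * y^2) = 1 := by
  intro x hx
  obtain ⟨hxm, hx1⟩ := hx
  have hu' : ∀ t, u t = vv t := fun t => hu t
  simp only [hu']
  have hmain : ∫ y : ℝ, (2 * vv x - vv (x+y) - vv (x-y)) / (2 * y^2) = Real.pi := by
    rcases le_or_gt 0 x with hx0 | hx0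
    · exact core' hx0 hx1
    · have hswap : (fun y : ℝ => (2 * vv x - vv (x+y) - vv (x-y)) / (2*y^2))
          = (fun y : ℝ => (2 * vv (-x) - vv (-x+y) - vv (-x-y)) / (2*y^2)) := by
        funext y
        rw [show -x + y = -(x - y) by ring, show -x - y = -(x+y) by ring,
          vv_neg, vv_neg, vv_neg]
        ring
      calc ∫ y : ℝ, (2 * vv x - vv (x+y) - vv (x-y)) / (2 * y^2)
          = ∫ y : ℝ, (2 * vv (-x) - vv (-x+y) - vv (-x-y)) / (2*y^2) := by rw [hswap]
        _ = Real.pi := core' (by linarith) (by linarith)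
  rw [hmain]
  field_simp
end

section
/- Normalization of the nonlocal Poisson kernel in dimension N = 1 for σ ∈ (0,1): for every x with |x| < 1, ∫_{|y|>1} (γ_{1,σ}/|x-y|) · (1-x²)^σ/(y²-1)^σ dy = 1, where γ_{1,σ} = sin(πσ)/π. -/
open Real MeasureTheory

open Set

set_option maxHeartbeats 1000000

lemma aux_beta (σ : ℝ) (hσ : σ ∈ Set.Ioo (0:ℝ) 1) :
    IntegrableOn (fun u : ℝ => u ^ (-σ) * (1-u) ^ (σ-1)) (Set.Ioc 0 1) ∧
    ∫ u in Set.Ioc (0:ℝ) 1, u ^ (-σ) * (1-u) ^ (σ-1) = π / Real.sin (π * σ) := by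
  obtain ⟨h0, h1⟩ := hσ
  have hre1 : 0 < Complex.re ((1-σ:ℝ):ℂ) := by simpa using by linarith
  have hre2 : 0 < Complex.re ((σ:ℝ):ℂ) := by simpa using h0
  have hcong : EqOn (fun x : ℝ => (x:ℂ) ^ (((1-σ:ℝ):ℂ) - 1) * (1 - (x:ℂ)) ^ (((σ:ℝ):ℂ) - 1))
      (fun x : ℝ => ((x ^ (-σ) * (1-x) ^ (σ-1) : ℝ) : ℂ)) (Set.Ioc 0 1) := by
    intro x hx
    have hx0 : (0:ℝ) ≤ x := le_of_lt hx.1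
    have hx1 : (0:ℝ) ≤ 1 - x := by linarith [hx.2]
    simp only
    rw [show (((1-σ:ℝ):ℂ) - 1) = ((-σ:ℝ):ℂ) by push_cast; ring,
      show (((σ:ℝ):ℂ) - 1) = ((σ-1:ℝ):ℂ) by push_cast; ring,
      show (1 - (x:ℂ)) = ((1-x:ℝ):ℂ) by push_cast; ring,
      ← Complex.ofReal_cpow hx0, ← Complex.ofReal_cpow hx1, ← Complex.ofReal_mul]
  have hconv := Complex.betaIntegral_convergent hre1 hre2
  rw [intervalIntegrable_iff_integrableOn_Ioc_of_le zero_le_one] at hconv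
  have hint : IntegrableOn (fun u : ℝ => u ^ (-σ) * (1-u) ^ (σ-1)) (Set.Ioc 0 1) := by
    have h2 := (hconv.congr_fun hcong measurableSet_Ioc).re
    refine h2.congr (Filter.Eventually.of_forall fun x => ?_)
    simp
  refine ⟨hint, ?_⟩
  have hval := Complex.Gamma_mul_Gamma_eq_betaIntegral hre1 hre2
  rw [show ((1-σ:ℝ):ℂ) + ((σ:ℝ):ℂ) = 1 by push_cast; ring, Complex.Gamma_one, one_mul] at hval
  rw [Complex.betaIntegral, intervalIntegral.integral_of_le zero_le_one] at hval
  rw [setIntegral_congr_fun measurableSet_Ioc hcong] at hval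
  rw [Complex.Gamma_ofReal, Complex.Gamma_ofReal, ← Complex.ofReal_mul] at hval
  have hval2 : ((Real.Gamma (1-σ) * Real.Gamma σ : ℝ) : ℂ)
      = ((∫ x in Set.Ioc (0:ℝ) 1, x ^ (-σ) * (1-x) ^ (σ-1) : ℝ) : ℂ) :=
    hval.trans integral_ofReal
  have hval3 := Complex.ofReal_inj.mp hval2
  rw [← hval3, mul_comm, Real.Gamma_mul_Gamma_one_sub]

lemma aux_key (σ : ℝ) (hσ : σ ∈ Set.Ioo (0:ℝ) 1) :
    IntegrableOn (fun t : ℝ => t ^ (-σ) / (1 + t)) (Set.Ioi 0) ∧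
    ∫ t in Set.Ioi (0:ℝ), t ^ (-σ) / (1 + t) = π / Real.sin (π * σ) := by
  obtain ⟨h0, h1⟩ := hσ
  set h : ℝ → ℝ := fun u => u / (1 - u) with hh
  have hder : ∀ u ∈ Set.Ioo (0:ℝ) 1,
      HasDerivWithinAt h (((1-u)^2)⁻¹) (Set.Ioo 0 1) u := by
    intro u hu
    have h1u : (1:ℝ) - u ≠ 0 := ne_of_gt (by linarith [hu.2])
    have := (hasDerivAt_id u).div ((hasDerivAt_const u (1:ℝ)).sub (hasDerivAt_id u)) h1u
    refine (this.congr_deriv ?_).hasDerivWithinAt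
    simp only [Pi.sub_apply, id]
    field_simp
    ring
  have hinj : Set.InjOn h (Set.Ioo 0 1) := by
    intro u hu v hv he
    have hu1 : (1:ℝ) - u > 0 := by linarith [hu.2]
    have hv1 : (1:ℝ) - v > 0 := by linarith [hv.2]
    have : u * (1 - v) = v * (1 - u) := by
      simp only [hh] at he; field_simp at he; linarith [he]
    nlinarith
  have himg : h '' Set.Ioo 0 1 = Set.Ioi 0 := by
    ext t
    constructor
    · rintro ⟨u, hu, rfl⟩
      have hu1 : (1:ℝ) - u > 0 := by linarith [hu.2]
      exact div_pos hu.1 hu1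
    · intro ht
      refine ⟨t / (1 + t), ⟨?_, ?_⟩, ?_⟩
      · exact div_pos ht (by linarith [Set.mem_Ioi.mp ht])
      · rw [div_lt_one (by linarith [Set.mem_Ioi.mp ht])]; linarith [Set.mem_Ioi.mp ht]
      · have h1t : (1:ℝ) + t ≠ 0 := by have := Set.mem_Ioi.mp ht; intro hc; linarith
        simp only [hh]
        rw [show 1 - t / (1+t) = 1/(1+t) by field_simp; ring]
        field_simp
  have hEq : ∀ u ∈ Set.Ioo (0:ℝ) 1,
      |((1-u)^2)⁻¹| • ((h u) ^ (-σ) / (1 + h u)) = u ^ (-σ) * (1-u) ^ (σ-1) := by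
    intro u hu
    have hu0 : (0:ℝ) < u := hu.1
    have hv : (0:ℝ) < 1 - u := by linarith [hu.2]
    have h1 : (1:ℝ) + h u = (1-u)⁻¹ := by simp only [hh]; field_simp; ring
    have h2 : (h u) ^ (-σ) = u ^ (-σ) * (1-u) ^ σ := by
      simp only [hh]
      rw [Real.div_rpow hu0.le hv.le, Real.rpow_neg hv.le, div_eq_mul_inv, inv_inv]
    rw [h1, h2, smul_eq_mul, abs_of_pos (by positivity), Real.rpow_sub_one hv.ne']
    field_simp
  have himgint := integral_image_eq_integral_abs_deriv_smul measurableSet_Ioo hder hinj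
    (fun t => t ^ (-σ) / (1 + t))
  have hiff := integrableOn_image_iff_integrableOn_abs_deriv_smul measurableSet_Ioo hder hinj
    (fun t => t ^ (-σ) / (1 + t))
  rw [himg] at himgint hiff
  obtain ⟨hbint, hbval⟩ := aux_beta σ ⟨h0, h1⟩
  have hbint' : IntegrableOn (fun u : ℝ => u ^ (-σ) * (1-u) ^ (σ-1)) (Set.Ioo 0 1) :=
    hbint.mono_set Set.Ioo_subset_Ioc_self
  constructor
  · rw [hiff]
    exact (hbint'.congr_fun (fun u hu => (hEq u hu).symm) measurableSet_Ioo)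
  · rw [himgint, setIntegral_congr_fun measurableSet_Ioo hEq, ← integral_Ioc_eq_integral_Ioo,
      hbval]

/-- normalization of the nonlocal Poisson kernel in dimension one: for
`σ ∈ (0,1)` and `|x| < 1`,
`∫_{|y|>1} (γ_{1,σ}/|x-y|) (1-x²)^σ/(y²-1)^σ dy = 1`, where `γ_{1,σ} = sin(πσ)/π`. -/
theorem stmt_11 (σ : ℝ) (hσ : σ ∈ Set.Ioo (0:ℝ) 1) (γ : ℝ)
    (hγ : γ = Real.sin (Real.pi * σ) / Real.pi) :
    ∀ x : ℝ, |x| < 1 →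
      ∫ y in {y : ℝ | 1 < |y|},
        (γ / |x - y|) * (1 - x^2) ^ σ / (y^2 - 1) ^ σ = 1 := by
  obtain ⟨hσ0, hσ1⟩ := hσ
  intro x hx
  obtain ⟨hxl, hxr⟩ := abs_lt.mp hx
  set a : ℝ := 1 - x^2 with ha
  have ha0 : 0 < a := by nlinarith
  have hsin : 0 < Real.sin (π * σ) :=
    Real.sin_pos_of_pos_of_lt_pi (by positivity) (by nlinarith [Real.pi_pos])
  have hγ0 : 0 < γ := hγ ▸ div_pos hsin Real.pi_pos
  set f : ℝ → ℝ := fun y => (γ / |x - y|) * (1 - x^2) ^ σ / (y^2 - 1) ^ σ with hf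
  -- change of variables g t = sqrt (1 + a t) : Ioi 0 → Ioi 1
  set g : ℝ → ℝ := fun t => Real.sqrt (1 + a*t) with hg
  have hgder : ∀ t ∈ Set.Ioi (0:ℝ),
      HasDerivWithinAt g (a / (2 * Real.sqrt (1 + a*t))) (Set.Ioi 0) t := by
    intro t ht
    have hpos : 0 < 1 + a*t := by nlinarith [Set.mem_Ioi.mp ht]
    have hin : HasDerivAt (fun t : ℝ => 1 + a*t) a t := by
      simpa using ((hasDerivAt_id t).const_mul a).const_add 1
    have hc := (Real.hasDerivAt_sqrt hpos.ne').comp t hin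
    refine (hc.congr_deriv ?_).hasDerivWithinAt
    field_simp
  have hginj : Set.InjOn g (Set.Ioi 0) := by
    intro t ht u hu he
    have h1 : 0 < 1 + a*t := by nlinarith [Set.mem_Ioi.mp ht]
    have h2 : 0 < 1 + a*u := by nlinarith [Set.mem_Ioi.mp hu]
    have h3 := (Real.sqrt_inj h1.le h2.le).mp he
    have : a * t = a * u := by linarith
    exact mul_left_cancel₀ ha0.ne' this
  have hgimg : g '' Set.Ioi 0 = Set.Ioi 1 := by
    ext y
    constructor
    · rintro ⟨t, ht, rfl⟩
      have : 0 < a*t := mul_pos ha0 (Set.mem_Ioi.mp ht)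
      exact Set.mem_Ioi.mpr ((Real.lt_sqrt (by positivity)).mpr (by nlinarith))
    · intro hy
      have hy1 : 1 < y := Set.mem_Ioi.mp hy
      refine ⟨(y^2 - 1)/a, Set.mem_Ioi.mpr (div_pos (by nlinarith) ha0), ?_⟩
      show Real.sqrt (1 + a * ((y^2-1)/a)) = y
      rw [show 1 + a*((y^2-1)/a) = y^2 by field_simp; ring]
      exact Real.sqrt_sq (by linarith)
  have hEq : ∀ t ∈ Set.Ioi (0:ℝ),
      |a / (2 * Real.sqrt (1 + a*t))| • (f (g t) + f (-(g t)))
        = γ * (t ^ (-σ) / (1 + t)) := by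
    intro t ht
    have ht0 : 0 < t := Set.mem_Ioi.mp ht
    have hpos : 0 < 1 + a*t := by nlinarith
    set y : ℝ := Real.sqrt (1 + a*t) with hy
    have hy2 : y^2 = 1 + a*t := Real.sq_sqrt hpos.le
    have hy1 : 1 < y := (Real.lt_sqrt (by positivity)).mpr (by nlinarith [mul_pos ha0 ht0])
    have habs1 : |x - y| = y - x := by rw [abs_of_neg (by nlinarith), neg_sub]
    have habs2 : |x - -y| = y + x := by rw [sub_neg_eq_add, abs_of_pos (by nlinarith)]; ring
    have hsq : (-y)^2 = y^2 := neg_sq y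
    have hyx : (y - x) * (y + x) = a * (1 + t) := by rw [ha]; nlinarith [hy2]
    have hrw : (y^2 - 1 : ℝ) ^ σ = a ^ σ * t ^ σ := by
      rw [hy2, show (1 + a*t - 1 : ℝ) = a * t by ring, Real.mul_rpow ha0.le ht0.le]
    have htne : (t:ℝ) ^ σ ≠ 0 := by positivity
    have hane : (a:ℝ) ^ σ ≠ 0 := by positivity
    simp only [hf, hg, ← hy, habs1, habs2, hsq, hrw, ← ha, smul_eq_mul]
    rw [abs_of_pos (by positivity), Real.rpow_neg ht0.le]
    have hy0 : (0:ℝ) < y := by linarith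
    have h1t : (0:ℝ) < 1 + t := by linarith
    have hyxp : (0:ℝ) < y - x := by nlinarith
    have hyxp2 : (0:ℝ) < y + x := by nlinarith
    set T := t ^ σ with hT
    set A := a ^ σ with hA
    have hT0 : 0 < T := by rw [hT]; positivity
    have hA0 : 0 < A := by rw [hA]; positivity
    clear_value T A y a
    clear hf hg f g hT hA hy ha hrw hy2 htne hane hgder hginj hgimg hx hγ hsin
    field_simp
    linear_combination (-2*y) * hyx
  -- gather integral over Ioi 1
  obtain ⟨hkint, hkval⟩ := aux_key σ ⟨hσ0, hσ1⟩
  have himgint := integral_image_eq_integral_abs_deriv_smul measurableSet_Ioi hgder hginj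
    (fun y => f y + f (-y))
  have hiff := integrableOn_image_iff_integrableOn_abs_deriv_smul measurableSet_Ioi hgder hginj
    (fun y => f y + f (-y))
  rw [hgimg] at himgint hiff
  have hFint : IntegrableOn (fun y => f y + f (-y)) (Set.Ioi 1) := by
    rw [hiff]
    exact IntegrableOn.congr_fun (hkint.const_mul γ)
      (fun t ht => (hEq t ht).symm) measurableSet_Ioi
  have hFval : ∫ y in Set.Ioi (1:ℝ), (f y + f (-y)) = γ * (π / Real.sin (π * σ)) := by
    rw [himgint, setIntegral_congr_fun measurableSet_Ioi hEq, integral_const_mul, hkval]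
  -- measurability and nonnegativity of f
  have hfmeas : Measurable f := by
    rw [hf]; fun_prop
  have hfnn : ∀ y ∈ Set.Ioi (1:ℝ), 0 ≤ f y := by
    intro y hy
    have hy1 : 1 < y := Set.mem_Ioi.mp hy
    simp only [hf]
    have h1 : (0:ℝ) ≤ (y^2 - 1) ^ σ := Real.rpow_nonneg (by nlinarith) _
    have h2 : (0:ℝ) ≤ (1 - x^2) ^ σ := Real.rpow_nonneg (by nlinarith) _
    positivity
  have hfnn' : ∀ y ∈ Set.Ioi (1:ℝ), 0 ≤ f (-y) := by
    intro y hy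
    have hy1 : 1 < y := Set.mem_Ioi.mp hy
    simp only [hf, neg_sq]
    have h1 : (0:ℝ) ≤ (y^2 - 1) ^ σ := Real.rpow_nonneg (by nlinarith) _
    have h2 : (0:ℝ) ≤ (1 - x^2) ^ σ := Real.rpow_nonneg (by nlinarith) _
    positivity
  have hint1 : IntegrableOn f (Set.Ioi 1) := by
    refine Integrable.mono hFint hfmeas.aestronglyMeasurable.restrict ?_
    refine (ae_restrict_iff' measurableSet_Ioi).mpr (Filter.Eventually.of_forall fun y hy => ?_)
    rw [Real.norm_eq_abs, Real.norm_eq_abs, abs_of_nonneg (hfnn y hy),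
      abs_of_nonneg (by linarith [hfnn y hy, hfnn' y hy])]
    linarith [hfnn' y hy]
  have hint2 : IntegrableOn (fun y => f (-y)) (Set.Ioi 1) := by
    refine Integrable.mono hFint ((hfmeas.comp measurable_neg).aestronglyMeasurable.restrict) ?_
    refine (ae_restrict_iff' measurableSet_Ioi).mpr (Filter.Eventually.of_forall fun y hy => ?_)
    rw [Real.norm_eq_abs, Real.norm_eq_abs, abs_of_nonneg (hfnn' y hy),
      abs_of_nonneg (by linarith [hfnn y hy, hfnn' y hy])]
    linarith [hfnn y hy]
  -- the negative part
  have hnder : ∀ y ∈ Set.Ioi (1:ℝ),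
      HasDerivWithinAt (fun z : ℝ => -z) (-1 : ℝ) (Set.Ioi 1) y :=
    fun y _ => (hasDerivAt_neg y).hasDerivWithinAt
  have hninj : Set.InjOn (fun z : ℝ => -z) (Set.Ioi 1) := fun u _ v _ h => neg_injective h
  have hnimg : (fun z : ℝ => -z) '' Set.Ioi 1 = Set.Iio (-1) := by
    rw [Set.image_neg_eq_neg, Set.neg_Ioi]
  have hnegint := integral_image_eq_integral_abs_deriv_smul measurableSet_Ioi hnder hninj f
  have hneiff := integrableOn_image_iff_integrableOn_abs_deriv_smul measurableSet_Ioi hnder hninj f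
  rw [hnimg] at hnegint hneiff
  simp only [abs_neg, abs_one, one_smul] at hnegint hneiff
  have hintIio : IntegrableOn f (Set.Iio (-1)) := hneiff.mpr hint2
  -- split the domain
  have hsplit : {y : ℝ | 1 < |y|} = Set.Iio (-1) ∪ Set.Ioi 1 := by
    ext y
    simp only [Set.mem_setOf_eq, Set.mem_union, Set.mem_Iio, Set.mem_Ioi, lt_abs]
    constructor
    · rintro (h | h)
      exacts [Or.inr h, Or.inl (by linarith)]
    · rintro (h | h)
      exacts [Or.inr (by linarith), Or.inl h]
  have hdisj : Disjoint (Set.Iio (-1:ℝ)) (Set.Ioi 1) := by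
    rw [Set.disjoint_left]; intro y h1 h2
    exact absurd (Set.mem_Iio.mp h1) (by simp; linarith [Set.mem_Ioi.mp h2])
  have hcomm : ∫ y in Set.Ioi (1:ℝ), (f (-y) + f y) = γ * (π / Real.sin (π * σ)) := by
    rw [← hFval]
    exact setIntegral_congr_fun measurableSet_Ioi (fun y _ => add_comm _ _)
  calc ∫ y in {y : ℝ | 1 < |y|}, f y
      = (∫ y in Set.Iio (-1:ℝ), f y) + ∫ y in Set.Ioi (1:ℝ), f y := by
        rw [hsplit]; exact setIntegral_union hdisj measurableSet_Ioi hintIio hint1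
    _ = (∫ y in Set.Ioi (1:ℝ), f (-y)) + ∫ y in Set.Ioi (1:ℝ), f y := by rw [hnegint]
    _ = ∫ y in Set.Ioi (1:ℝ), (f (-y) + f y) := (integral_add hint2 hint1).symm
    _ = γ * (π / Real.sin (π * σ)) := hcomm
    _ = 1 := by
        rw [hγ]
        field_simp
end

section
/- In dimension N = 1 with s = 3/2, the function u(x) = ∫_{-1}^{1} G_{3/2}(x,y) dy, where G_{3/2} is the Boggio kernel on the interval (-1,1), satisfies the two-sided bound: there exist constants 0 < c ≤ C such that c·(1-x²)^{3/2} ≤ u(x) ≤ C·(1-x²)^{3/2} for all x ∈ (-1,1). -/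
open Real MeasureTheory

noncomputable def myf (t : ℝ) : ℝ := t ^ ((1:ℝ)/2) * (1 + t) ^ (-(1:ℝ)/2)

lemma neg_half : (-(1:ℝ)/2) = -((1:ℝ)/2) := by norm_num

lemma myf_nonneg {t : ℝ} (ht : 0 ≤ t) : 0 ≤ myf t := by
  unfold myf
  have h1 : (0:ℝ) ≤ 1 + t := by linarith
  positivity

lemma myf_eq {t : ℝ} (ht : 0 ≤ t) : myf t = (t / (1 + t)) ^ ((1:ℝ)/2) := by
  unfold myf
  have h1 : (0:ℝ) < 1 + t := by linarith
  rw [Real.div_rpow ht h1.le, neg_half, Real.rpow_neg h1.le, ← div_eq_mul_inv]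

lemma myf_le_one {t : ℝ} (ht : 0 ≤ t) : myf t ≤ 1 := by
  rw [myf_eq ht]
  have h1 : (0:ℝ) < 1 + t := by linarith
  apply Real.rpow_le_one (by positivity)
  · rw [div_le_one h1]; linarith
  · norm_num

lemma myf_contOn (r : ℝ) : ContinuousOn myf (Set.Ioo 0 r) := by
  apply ContinuousOn.mul
  · exact (Real.continuous_rpow_const (by norm_num)).continuousOn
  · apply ContinuousOn.rpow_const (by fun_prop)
    intro t ht
    left; intro h; simp at ht; nlinarith [ht.1]

lemma myf_integrableOn (r : ℝ) : IntegrableOn myf (Set.Ioo 0 r) := by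
  apply Integrable.mono' (g := fun _ => (1:ℝ)) (integrableOn_const (by simp))
  · exact (myf_contOn r).aestronglyMeasurable measurableSet_Ioo
  · filter_upwards [ae_restrict_mem measurableSet_Ioo] with t ht
    rw [Real.norm_eq_abs, abs_of_nonneg (myf_nonneg ht.1.le)]
    exact myf_le_one ht.1.le

noncomputable def myPhi (r : ℝ) : ℝ := ∫ t in Set.Ioo (0:ℝ) r, myf t

lemma myPhi_nonneg (r : ℝ) : 0 ≤ myPhi r :=
  setIntegral_nonneg measurableSet_Ioo fun t ht => myf_nonneg ht.1.le

lemma myPhi_mono : Monotone myPhi := by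
  intro a b hab
  apply setIntegral_mono_set (myf_integrableOn b)
  · filter_upwards [ae_restrict_mem measurableSet_Ioo] with t ht using myf_nonneg ht.1.le
  · exact Filter.Eventually.of_forall (fun t ht => ⟨ht.1, lt_of_lt_of_le ht.2 hab⟩)

lemma myPhi_meas : Measurable myPhi := myPhi_mono.measurable

lemma myPhi_le {r : ℝ} (hr : 0 ≤ r) :
    myPhi r ≤ r ^ ((3:ℝ)/2) * (1 + r) ^ (-(1:ℝ)/2) := by
  rcases eq_or_lt_of_le hr with h | h
  · simp [myPhi, ← h, Real.zero_rpow (by norm_num : (3:ℝ)/2 ≠ 0)]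
  have h1r : (0:ℝ) < 1 + r := by linarith
  have hcst : r ^ ((1:ℝ)/2) * (1 + r) ^ (-(1:ℝ)/2) = (r / (1+r)) ^ ((1:ℝ)/2) := by
    rw [Real.div_rpow hr h1r.le, neg_half, Real.rpow_neg h1r.le, ← div_eq_mul_inv]
  have key : myPhi r ≤ ∫ _ in Set.Ioo (0:ℝ) r, r ^ ((1:ℝ)/2) * (1 + r) ^ (-(1:ℝ)/2) := by
    apply setIntegral_mono_on (myf_integrableOn r) (integrableOn_const (by simp))
      measurableSet_Ioo
    intro t ht
    obtain ⟨ht1, ht2⟩ := ht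
    rw [myf_eq ht1.le, hcst]
    apply Real.rpow_le_rpow (div_nonneg ht1.le (by linarith)) _ (by norm_num)
    rw [div_le_div_iff₀ (by linarith) h1r]
    nlinarith
  calc myPhi r ≤ _ := key
    _ = r * (r ^ ((1:ℝ)/2) * (1 + r) ^ (-(1:ℝ)/2)) := by
        rw [setIntegral_const]
        simp [Real.volume_Ioo, ENNReal.toReal_ofReal hr, hr]
    _ = r ^ ((3:ℝ)/2) * (1 + r) ^ (-(1:ℝ)/2) := by
        rw [← mul_assoc]
        congr 1
        rw [← Real.rpow_one_add' (le_of_lt h) (by norm_num)]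
        norm_num

lemma le_myPhi {r : ℝ} (hr : 0 ≤ r) :
    2/3 * (r ^ ((3:ℝ)/2) * (1 + r) ^ (-(1:ℝ)/2)) ≤ myPhi r := by
  rcases eq_or_lt_of_le hr with h | h
  · simp [myPhi, ← h, Real.zero_rpow (by norm_num : (3:ℝ)/2 ≠ 0)]
  have h1r : (0:ℝ) < 1 + r := by linarith
  have key : ∫ t in Set.Ioo (0:ℝ) r, t ^ ((1:ℝ)/2) * (1 + r) ^ (-(1:ℝ)/2) ≤ myPhi r := by
    apply setIntegral_mono_on _ (myf_integrableOn r) measurableSet_Ioo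
    · intro t ht
      obtain ⟨ht1, ht2⟩ := ht
      unfold myf
      apply mul_le_mul_of_nonneg_left _ (Real.rpow_nonneg ht1.le _)
      rw [neg_half, Real.rpow_neg h1r.le, Real.rpow_neg (by linarith : (0:ℝ) ≤ 1 + t)]
      apply inv_anti₀ (Real.rpow_pos_of_pos (by linarith) _)
      exact Real.rpow_le_rpow (by linarith) (by linarith) (by norm_num)
    · apply Integrable.mul_const
      apply Integrable.mono' (g := fun _ => r ^ ((1:ℝ)/2))
        (integrableOn_const (by simp))
      · exact ((Real.continuous_rpow_const (by norm_num)).continuousOn).aestronglyMeasurable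
          measurableSet_Ioo
      · filter_upwards [ae_restrict_mem measurableSet_Ioo] with t ht
        rw [Real.norm_eq_abs, abs_of_nonneg (Real.rpow_nonneg ht.1.le _)]
        exact Real.rpow_le_rpow ht.1.le ht.2.le (by norm_num)
  refine le_trans (le_of_eq ?_) key
  rw [MeasureTheory.integral_mul_const]
  have hint : ∫ t in Set.Ioo (0:ℝ) r, t ^ ((1:ℝ)/2) = 2/3 * r ^ ((3:ℝ)/2) := by
    have : ∫ t in Set.Ioo (0:ℝ) r, t ^ ((1:ℝ)/2) = ∫ t in (0:ℝ)..r, t ^ ((1:ℝ)/2) := by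
      rw [intervalIntegral.integral_of_le hr, MeasureTheory.integral_Ioc_eq_integral_Ioo]
    rw [this, integral_rpow (Or.inl (by norm_num))]
    rw [Real.zero_rpow (by norm_num : (1:ℝ)/2 + 1 ≠ 0)]
    norm_num [div_eq_mul_inv]
    ring
  rw [hint]; ring

lemma one_sub_mul_pos {x y : ℝ} (hx : x ∈ Set.Ioo (-1:ℝ) 1) (hy : y ∈ Set.Ioo (-1:ℝ) 1) :
    0 < 1 - x * y := by
  obtain ⟨hx1, hx2⟩ := hx; obtain ⟨hy1, hy2⟩ := hy
  have ha : x^2 < 1 := by nlinarith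
  have hb : y^2 < 1 := by nlinarith
  have h2 : x^2 * y^2 < 1 := by nlinarith [sq_nonneg x, sq_nonneg y]
  nlinarith [sq_nonneg (x*y - 1)]

lemma rho_calc {x y : ℝ} (hx : x ∈ Set.Ioo (-1:ℝ) 1) (hy : y ∈ Set.Ioo (-1:ℝ) 1)
    (hne : x ≠ y) :
    |x - y|^2 * (((1-x^2)*(1-y^2)/|x-y|^2) ^ ((3:ℝ)/2) *
      (1 + (1-x^2)*(1-y^2)/|x-y|^2) ^ (-(1:ℝ)/2)) =
    (1-x^2) ^ ((3:ℝ)/2) * (1-y^2) ^ ((3:ℝ)/2) / (1 - x*y) := by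
  obtain ⟨hx1, hx2⟩ := hx
  obtain ⟨hy1, hy2⟩ := hy
  have hd : 0 < |x - y| := abs_pos.2 (sub_ne_zero.2 hne)
  set d := |x - y| with hdd
  have hA : 0 < 1 - x^2 := by nlinarith
  have hB : 0 < 1 - y^2 := by nlinarith
  have hP : 0 < 1 - x*y := one_sub_mul_pos ⟨hx1, hx2⟩ ⟨hy1, hy2⟩
  have hsum : d^2 + (1-x^2)*(1-y^2) = (1-x*y)^2 := by
    rw [hdd, sq_abs]; ring
  have hAB : 0 < (1-x^2)*(1-y^2) := mul_pos hA hB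
  have e1 : (1 + (1-x^2)*(1-y^2)/d^2) = ((1-x*y)/d)^2 := by
    field_simp
    linarith [hsum]
  have e2 : (((1-x*y)/d)^2 : ℝ) ^ (-(1:ℝ)/2) = d / (1-x*y) := by
    rw [← Real.rpow_natCast ((1-x*y)/d) 2, ← Real.rpow_mul (by positivity)]
    norm_num
    rw [Real.rpow_neg_one]
    rw [inv_div]
  have e3 : ((1-x^2)*(1-y^2)/d^2 : ℝ) ^ ((3:ℝ)/2) =
      (1-x^2) ^ ((3:ℝ)/2) * (1-y^2) ^ ((3:ℝ)/2) / d^3 := by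
    rw [Real.div_rpow hAB.le (by positivity), Real.mul_rpow hA.le hB.le]
    congr 1
    rw [← Real.rpow_natCast d 2, ← Real.rpow_mul hd.le, ← Real.rpow_natCast d 3]
    norm_num
  rw [e1, e2, e3]
  field_simp


/-- in dimension `1` with `s = 3/2`, the solution
`u(x) = ∫_{-1}^1 G_{3/2}(x,y) dy` given by the Boggio kernel satisfies the two-sided
boundary estimate `c (1-x²)^{3/2} ≤ u(x) ≤ C (1-x²)^{3/2}` on `(-1,1)`. -/
theorem stmt_12 (s k : ℝ) (hs : s = 3/2) (hk : k = 2 ^ (1 - 2*s) / (2 * Real.Gamma s ^ 2))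
    (ρ G : ℝ → ℝ → ℝ)
    (hρ : ∀ x y, ρ x y = (1 - x^2) * (1 - y^2) / |x - y|^2)
    (hG : ∀ x y, G x y = k * |x - y| ^ (2*s - 1) *
      ∫ t in Set.Ioo (0:ℝ) (ρ x y), t ^ (s - 1) * (1 + t) ^ (-(1:ℝ)/2))
    (u : ℝ → ℝ) (hu : ∀ x, u x = ∫ y in Set.Ioo (-1:ℝ) 1, G x y) :
    ∃ c C : ℝ, 0 < c ∧ c ≤ C ∧ ∀ x ∈ Set.Ioo (-1:ℝ) 1,
      c * (1 - x^2) ^ ((3:ℝ)/2) ≤ u x ∧ u x ≤ C * (1 - x^2) ^ ((3:ℝ)/2) := by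
  subst hs
  have hΓ : 0 < Real.Gamma (3/2) := Real.Gamma_pos_of_pos (by norm_num)
  have hk0 : 0 < k := by rw [hk]; positivity
  -- rewrite G in terms of myPhi
  have hGid : ∀ x y, G x y = k * |x - y|^2 * myPhi (ρ x y) := by
    intro x y
    rw [hG]
    congr 1
    · congr 1
      rw [show (2*((3:ℝ)/2) - 1) = ((2:ℕ):ℝ) by norm_num, Real.rpow_natCast]
    · unfold myPhi myf
      congr 1
      ext t
      norm_num
  have hGnonneg : ∀ x y, 0 ≤ G x y := by
    intro x y
    rw [hGid]
    have := myPhi_nonneg (ρ x y)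
    positivity
  refine ⟨k/3 * (3/4:ℝ) ^ ((3:ℝ)/2), 4*k, by positivity, ?_, ?_⟩
  · have h34 : ((3:ℝ)/4) ^ ((3:ℝ)/2) ≤ 1 :=
      Real.rpow_le_one (by norm_num) (by norm_num) (by norm_num)
    nlinarith
  intro x hx
  obtain ⟨hx1, hx2⟩ := hx
  have hA : 0 < 1 - x^2 := by nlinarith
  -- pointwise bounds
  have hub : ∀ y ∈ Set.Ioo (-1:ℝ) 1, y ≠ x → G x y ≤ 2*k * (1-x^2) ^ ((3:ℝ)/2) := by
    intro y hy hne
    obtain ⟨hy1, hy2⟩ := hy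
    have hB : 0 < 1 - y^2 := by nlinarith
    have hP : 0 < 1 - x*y := one_sub_mul_pos ⟨hx1, hx2⟩ ⟨hy1, hy2⟩
    have hd : 0 < |x - y| := abs_pos.2 (sub_ne_zero.2 (Ne.symm hne))
    have hρ0 : 0 ≤ ρ x y := by rw [hρ]; positivity
    have h1 : G x y ≤ k * (|x-y|^2 * ((ρ x y) ^ ((3:ℝ)/2) * (1 + ρ x y) ^ (-(1:ℝ)/2))) := by
      rw [hGid, mul_assoc]
      exact mul_le_mul_of_nonneg_left
        (mul_le_mul_of_nonneg_left (myPhi_le hρ0) (by positivity)) hk0.le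
    have h2 : |x-y|^2 * ((ρ x y) ^ ((3:ℝ)/2) * (1 + ρ x y) ^ (-(1:ℝ)/2)) =
        (1-x^2) ^ ((3:ℝ)/2) * (1-y^2) ^ ((3:ℝ)/2) / (1 - x*y) := by
      rw [hρ]; exact rho_calc ⟨hx1, hx2⟩ ⟨hy1, hy2⟩ (Ne.symm hne)
    rw [h2] at h1
    refine h1.trans ?_
    have hB32 : (1-y^2) ^ ((3:ℝ)/2) ≤ 1 - y^2 := by
      calc (1-y^2) ^ ((3:ℝ)/2) ≤ (1-y^2) ^ ((1:ℝ)) :=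
            Real.rpow_le_rpow_of_exponent_ge hB (by nlinarith) (by norm_num)
        _ = 1 - y^2 := Real.rpow_one _
    have hfrac : (1-y^2) ^ ((3:ℝ)/2) / (1-x*y) ≤ 2 := by
      rw [div_le_iff₀ hP]
      nlinarith [sq_nonneg (x - y)]
    have hA32 : (0:ℝ) ≤ (1-x^2) ^ ((3:ℝ)/2) := Real.rpow_nonneg hA.le _
    calc k * ((1-x^2) ^ ((3:ℝ)/2) * (1-y^2) ^ ((3:ℝ)/2) / (1 - x*y))
        = k * (1-x^2) ^ ((3:ℝ)/2) * ((1-y^2) ^ ((3:ℝ)/2) / (1 - x*y)) := by ring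
      _ ≤ k * (1-x^2) ^ ((3:ℝ)/2) * 2 :=
          mul_le_mul_of_nonneg_left hfrac (by positivity)
      _ = 2*k * (1-x^2) ^ ((3:ℝ)/2) := by ring
  have hlb : ∀ y ∈ Set.Ioo (-(1:ℝ)/2) (1/2), y ≠ x →
      k/3 * (3/4:ℝ) ^ ((3:ℝ)/2) * (1-x^2) ^ ((3:ℝ)/2) ≤ G x y := by
    intro y hy hne
    obtain ⟨hy1, hy2⟩ := hy
    have hy1' : (-1:ℝ) < y := by linarith
    have hy2' : y < 1 := by linarith
    have hB : 0 < 1 - y^2 := by nlinarith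
    have hP : 0 < 1 - x*y := one_sub_mul_pos ⟨hx1, hx2⟩ ⟨hy1', hy2'⟩
    have hP2 : 1 - x*y ≤ 2 := by nlinarith
    have hd : 0 < |x - y| := abs_pos.2 (sub_ne_zero.2 (Ne.symm hne))
    have hρ0 : 0 ≤ ρ x y := by rw [hρ]; positivity
    have h1 : k * (|x-y|^2 * (2/3 * ((ρ x y) ^ ((3:ℝ)/2) * (1 + ρ x y) ^ (-(1:ℝ)/2))))
        ≤ G x y := by
      rw [hGid, mul_assoc]
      exact mul_le_mul_of_nonneg_left
        (mul_le_mul_of_nonneg_left (le_myPhi hρ0) (by positivity)) hk0.le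
    have h2 : |x-y|^2 * ((ρ x y) ^ ((3:ℝ)/2) * (1 + ρ x y) ^ (-(1:ℝ)/2)) =
        (1-x^2) ^ ((3:ℝ)/2) * (1-y^2) ^ ((3:ℝ)/2) / (1 - x*y) := by
      rw [hρ]; exact rho_calc ⟨hx1, hx2⟩ ⟨hy1', hy2'⟩ (Ne.symm hne)
    refine le_trans ?_ h1
    have e : k * (|x-y|^2 * (2/3 * ((ρ x y) ^ ((3:ℝ)/2) * (1 + ρ x y) ^ (-(1:ℝ)/2)))) =
        2/3 * k * ((1-x^2) ^ ((3:ℝ)/2) * (1-y^2) ^ ((3:ℝ)/2) / (1 - x*y)) := by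
      rw [show k * (|x-y|^2 * (2/3 * ((ρ x y) ^ ((3:ℝ)/2) * (1 + ρ x y) ^ (-(1:ℝ)/2)))) =
        2/3 * k * (|x-y|^2 * ((ρ x y) ^ ((3:ℝ)/2) * (1 + ρ x y) ^ (-(1:ℝ)/2))) from by ring,
        h2]
    rw [e]
    have hA32 : (0:ℝ) ≤ (1-x^2) ^ ((3:ℝ)/2) := Real.rpow_nonneg hA.le _
    have hB32 : (3/4:ℝ) ^ ((3:ℝ)/2) ≤ (1-y^2) ^ ((3:ℝ)/2) :=
      Real.rpow_le_rpow (by norm_num) (by nlinarith) (by norm_num)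
    have key : (1-x^2) ^ ((3:ℝ)/2) * (3/4:ℝ) ^ ((3:ℝ)/2) / 2 ≤
        (1-x^2) ^ ((3:ℝ)/2) * (1-y^2) ^ ((3:ℝ)/2) / (1 - x*y) := by
      apply div_le_div₀ (by positivity) (mul_le_mul_of_nonneg_left hB32 hA32) hP hP2
    calc k/3 * (3/4:ℝ) ^ ((3:ℝ)/2) * (1-x^2) ^ ((3:ℝ)/2)
        = 2/3 * k * ((1-x^2) ^ ((3:ℝ)/2) * (3/4:ℝ) ^ ((3:ℝ)/2) / 2) := by ring
      _ ≤ 2/3 * k * ((1-x^2) ^ ((3:ℝ)/2) * (1-y^2) ^ ((3:ℝ)/2) / (1 - x*y)) :=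
          mul_le_mul_of_nonneg_left key (by positivity)
  -- measurability and integrability of G x ·
  have hmeas : Measurable (fun y => G x y) := by
    have e1 : (fun y => G x y) = fun y => k * |x - y|^2 * myPhi (ρ x y) :=
      funext (fun y => hGid x y)
    have e2 : (fun y => ρ x y) = fun y => (1 - x^2) * (1 - y^2) / |x - y|^2 :=
      funext (fun y => hρ x y)
    have hρm : Measurable (fun y => ρ x y) := by
      rw [e2]
      exact ((continuous_const.mul (continuous_const.sub (continuous_pow 2))).measurable).div
        (((continuous_const.sub continuous_id).abs.pow 2).measurable)
    rw [e1]
    exact (measurable_const.mul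
      (((continuous_const.sub continuous_id).abs.pow 2).measurable)).mul
      (myPhi_meas.comp hρm)
  have haex : ∀ᵐ (y : ℝ), y ≠ x := by
    refine MeasureTheory.ae_iff.2 ?_
    simp only [ne_eq, not_not, Set.setOf_eq_eq_singleton, Real.volume_singleton]
  have hint : IntegrableOn (fun y => G x y) (Set.Ioo (-1:ℝ) 1) := by
    apply Integrable.mono' (g := fun _ => 2*k * (1-x^2) ^ ((3:ℝ)/2))
      (integrableOn_const (by simp))
    · exact hmeas.aestronglyMeasurable
    · filter_upwards [ae_restrict_mem measurableSet_Ioo,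
        MeasureTheory.ae_restrict_of_ae haex] with y hy hne
      rw [Real.norm_eq_abs, abs_of_nonneg (hGnonneg x y)]
      exact hub y hy hne
  constructor
  · -- lower bound
    have hsub : Set.Ioo (-(1:ℝ)/2) (1/2) ⊆ Set.Ioo (-1:ℝ) 1 := by
      intro y hy; exact ⟨by linarith [hy.1], by linarith [hy.2]⟩
    have step1 : ∫ y in Set.Ioo (-(1:ℝ)/2) (1/2), G x y ≤ u x := by
      rw [hu]
      apply setIntegral_mono_set hint
      · filter_upwards [ae_restrict_mem measurableSet_Ioo] with y _ using hGnonneg x y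
      · exact HasSubset.Subset.eventuallyLE hsub
    have step2 : k/3 * (3/4:ℝ) ^ ((3:ℝ)/2) * (1-x^2) ^ ((3:ℝ)/2) * 1 ≤
        ∫ y in Set.Ioo (-(1:ℝ)/2) (1/2), G x y := by
      have := setIntegral_const (μ := volume) (s := Set.Ioo (-(1:ℝ)/2) (1/2))
        (c := k/3 * (3/4:ℝ) ^ ((3:ℝ)/2) * (1-x^2) ^ ((3:ℝ)/2))
      have hvol : (volume (Set.Ioo (-(1:ℝ)/2) (1/2))).toReal = 1 := by
        rw [Real.volume_Ioo]
        norm_num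
      rw [measureReal_def, hvol] at this
      simp only [one_smul] at this
      rw [mul_one, ← this]
      apply integral_mono_ae
      · exact integrableOn_const (by simp)
      · exact hint.mono_set hsub
      · filter_upwards [ae_restrict_mem measurableSet_Ioo,
          MeasureTheory.ae_restrict_of_ae haex] with y hy hne
        exact hlb y hy hne
    calc k/3 * (3/4:ℝ) ^ ((3:ℝ)/2) * (1-x^2) ^ ((3:ℝ)/2)
        = k/3 * (3/4:ℝ) ^ ((3:ℝ)/2) * (1-x^2) ^ ((3:ℝ)/2) * 1 := by ring
      _ ≤ _ := step2.trans step1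
  · -- upper bound
    rw [hu]
    have step : (∫ y in Set.Ioo (-1:ℝ) 1, G x y) ≤
        ∫ _ in Set.Ioo (-1:ℝ) 1, 2*k * (1-x^2) ^ ((3:ℝ)/2) := by
      apply integral_mono_ae hint (integrableOn_const (by simp))
      filter_upwards [ae_restrict_mem measurableSet_Ioo,
        MeasureTheory.ae_restrict_of_ae haex] with y hy hne
      exact hub y hy hne
    refine step.trans (le_of_eq ?_)
    rw [setIntegral_const]
    have hvol : (volume (Set.Ioo (-1:ℝ) 1)).toReal = 2 := by
      rw [Real.volume_Ioo]; norm_num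
    rw [measureReal_def, hvol]
    simp only [smul_eq_mul]
    ring
end
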